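/- arXiv:2602.09198 — 2 statements merged into one kernel-verified Lean document; each statement's English description precedes it below -/
import Mathlib

section
/- (Divergence identity on the control volume to the right of a sliver.) For every C¹ function q on a neighbourhood of the closure of C⁺, one has 2∬_{C⁺} q(∂_t q + ∂_x q) dx dt = ∫₀^{Δx} q(x,Δt)² dx − ∫₀^{Δx} q(x,0)² dx + ∫₀^{Δt} q(Δx,t)² dt − {q²}⁺. -/
open MeasureTheory

/-- The open sliver (rhombus) with vertices `(0,0)`, `(δΔx, Δt/2)`, `(0, Δt)`
and `(−δΔx, Δt/2)` in the `(x,t)`-plane. -/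
def sliverSet (Δx Δt δ : ℝ) : Set (ℝ × ℝ) :=
  {p | |p.1| * (Δt / 2) + |p.2 - Δt / 2| * (δ * Δx) < δ * Δx * (Δt / 2)}

/-- Weighted right-face pairing `{w}⁺`: the integral of `w·(n_x + n_t)` over the
two right faces of the sliver with respect to arclength (`n` the outward unit
normal of the sliver). -/
noncomputable def pairPlus (Δx Δt δ : ℝ) (w : ℝ × ℝ → ℝ) : ℝ :=
  (∫ s in (0:ℝ)..1, w (s * (δ * Δx), s * (Δt / 2)) * (Δt / 2 - δ * Δx)) +
  (∫ s in (0:ℝ)..1, w ((1 - s) * (δ * Δx), (1 + s) * (Δt / 2)) * (Δt / 2 + δ * Δx))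

/-- Weighted left-face pairing `{w}⁻`: the integral of `w·(n_x + n_t)` over the
two left faces of the sliver with respect to arclength (`n` the outward unit
normal of the sliver). -/
noncomputable def pairMinus (Δx Δt δ : ℝ) (w : ℝ × ℝ → ℝ) : ℝ :=
  -(∫ s in (0:ℝ)..1, w (-(s * (δ * Δx)), s * (Δt / 2)) * (Δt / 2 + δ * Δx)) -
  (∫ s in (0:ℝ)..1, w (-((1 - s) * (δ * Δx)), (1 + s) * (Δt / 2)) * (Δt / 2 - δ * Δx))

/-- The control volume to the right of the sliver:
`C⁺ = ((0,Δx)×(0,Δt)) \ cl(S)`. -/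
def Cplus (Δx Δt δ : ℝ) : Set (ℝ × ℝ) :=
  (Set.Ioo 0 Δx ×ˢ Set.Ioo 0 Δt) \ closure (sliverSet Δx Δt δ)

/-- The control volume to the left of the sliver:
`C⁻ = ((−Δx,0)×(0,Δt)) \ cl(S)`. -/
def Cminus (Δx Δt δ : ℝ) : Set (ℝ × ℝ) :=
  (Set.Ioo (-Δx) 0 ×ˢ Set.Ioo 0 Δt) \ closure (sliverSet Δx Δt δ)

/-- Partial derivative in time `∂ₜ f`. -/
noncomputable def dT (f : ℝ × ℝ → ℝ) (p : ℝ × ℝ) : ℝ := fderiv ℝ f p (0, 1)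

/-- Partial derivative in space `∂ₓ f`. -/
noncomputable def dX (f : ℝ × ℝ → ℝ) (p : ℝ × ℝ) : ℝ := fderiv ℝ f p (1, 0)

open Set Filter Topology

namespace SliverAux

variable {Δx Δt δ : ℝ}

lemma closure_sliver (hΔx : 0 < Δx) (hΔt : 0 < Δt) (hδ0 : 0 < δ) :
    closure (sliverSet Δx Δt δ)
      = {p : ℝ × ℝ | |p.1| * (Δt / 2) + |p.2 - Δt / 2| * (δ * Δx) ≤ δ * Δx * (Δt / 2)} := by
  have hc : 0 < δ * Δx * (Δt / 2) := by positivity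
  have hcont : Continuous fun p : ℝ × ℝ => |p.1| * (Δt / 2) + |p.2 - Δt / 2| * (δ * Δx) := by
    fun_prop
  apply Subset.antisymm
  · refine closure_minimal (fun p hp => ?_) (isClosed_le hcont continuous_const)
    have hp' : |p.1| * (Δt / 2) + |p.2 - Δt / 2| * (δ * Δx) < δ * Δx * (Δt / 2) := hp
    exact le_of_lt hp'
  · intro p hp
    have hf : Tendsto (fun r : ℝ => ((r * p.1, Δt / 2 + r * (p.2 - Δt / 2)) : ℝ × ℝ))
        (𝓝[<] 1) (𝓝 p) := by
      have hcf : Continuous fun r : ℝ => ((r * p.1, Δt / 2 + r * (p.2 - Δt / 2)) : ℝ × ℝ) := by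
        fun_prop
      refine Tendsto.mono_left ?_ nhdsWithin_le_nhds
      have := hcf.tendsto 1
      simpa using this
    refine mem_closure_of_tendsto hf ?_
    filter_upwards [Ioo_mem_nhdsLT_of_mem (by norm_num : (1:ℝ) ∈ Set.Ioc 0 1)] with r hr
    have hr0 : 0 ≤ r := hr.1.le
    show |r * p.1| * (Δt / 2) + |Δt / 2 + r * (p.2 - Δt / 2) - Δt / 2| * (δ * Δx)
        < δ * Δx * (Δt / 2)
    have h1 : |r * p.1| = r * |p.1| := by rw [abs_mul, abs_of_nonneg hr0]
    have h2 : |Δt / 2 + r * (p.2 - Δt / 2) - Δt / 2| = r * |p.2 - Δt / 2| := by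
      rw [show Δt / 2 + r * (p.2 - Δt / 2) - Δt / 2 = r * (p.2 - Δt / 2) by ring,
        abs_mul, abs_of_nonneg hr0]
    rw [h1, h2]
    have hle : r * (|p.1| * (Δt / 2) + |p.2 - Δt / 2| * (δ * Δx)) ≤ r * (δ * Δx * (Δt / 2)) :=
      mul_le_mul_of_nonneg_left hp hr0
    nlinarith [hr.2, hr.1]

lemma mem_Cplus_iff (hΔx : 0 < Δx) (hΔt : 0 < Δt) (hδ0 : 0 < δ) {p : ℝ × ℝ} :
    p ∈ Cplus Δx Δt δ ↔ (0 < p.1 ∧ p.1 < Δx ∧ 0 < p.2 ∧ p.2 < Δt ∧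
      δ * Δx * (Δt / 2) < |p.1| * (Δt / 2) + |p.2 - Δt / 2| * (δ * Δx)) := by
  rw [Cplus, closure_sliver hΔx hΔt hδ0]
  simp only [Set.mem_diff, Set.mem_prod, Set.mem_Ioo, Set.mem_setOf_eq, not_le]
  tauto

/-- left section boundary -/
noncomputable def ell (Δx Δt δ t : ℝ) : ℝ := δ * Δx * (Δt / 2 - |t - Δt / 2|) / (Δt / 2)

lemma ell_nonneg (hΔx : 0 < Δx) (hΔt : 0 < Δt) (hδ0 : 0 < δ) {t : ℝ}
    (ht : t ∈ Set.Icc 0 Δt) : 0 ≤ ell Δx Δt δ t := by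
  have hb : |t - Δt / 2| ≤ Δt / 2 := by
    rw [abs_le]; constructor <;> [linarith [ht.1]; linarith [ht.2]]
  exact div_nonneg (mul_nonneg (by positivity) (by linarith)) (by linarith)

lemma ell_le (hΔx : 0 < Δx) (hΔt : 0 < Δt) (hδ0 : 0 < δ) (t : ℝ) :
    ell Δx Δt δ t ≤ δ * Δx := by
  rw [ell, div_le_iff₀ (by linarith : (0:ℝ) < Δt / 2)]
  nlinarith [mul_nonneg (mul_pos hδ0 hΔx).le (abs_nonneg (t - Δt / 2))]

lemma mem_Cplus_iff' (hΔx : 0 < Δx) (hΔt : 0 < Δt) (hδ0 : 0 < δ) {x t : ℝ} :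
    (x, t) ∈ Cplus Δx Δt δ ↔
      (0 < t ∧ t < Δt ∧ ell Δx Δt δ t < x ∧ x < Δx) := by
  have hh : (0:ℝ) < Δt / 2 := by linarith
  rw [mem_Cplus_iff hΔx hΔt hδ0]
  constructor
  · rintro ⟨hx0, hxΔ, ht0, htΔ, hN⟩
    refine ⟨ht0, htΔ, ?_, hxΔ⟩
    rw [abs_of_pos hx0] at hN
    rw [ell, div_lt_iff₀ hh]
    nlinarith
  · rintro ⟨ht0, htΔ, hex, hxΔ⟩
    have h0 : 0 ≤ ell Δx Δt δ t := ell_nonneg hΔx hΔt hδ0 ⟨ht0.le, htΔ.le⟩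
    have hx0 : 0 < x := lt_of_le_of_lt h0 hex
    refine ⟨hx0, hxΔ, ht0, htΔ, ?_⟩
    rw [ell, div_lt_iff₀ hh] at hex
    rw [abs_of_pos hx0]
    nlinarith

lemma mem_closure_Cplus (hΔx : 0 < Δx) (hΔt : 0 < Δt) (hδ0 : 0 < δ) (hδ : δ ≤ 1 / 2)
    {x t : ℝ} (ht : t ∈ Set.Icc 0 Δt) (hx : ell Δx Δt δ t ≤ x) (hx' : x ≤ Δx) :
    (x, t) ∈ closure (Cplus Δx Δt δ) := by
  have hh : (0:ℝ) < Δt / 2 := by linarith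
  have ha : (0:ℝ) < δ * Δx := by positivity
  have haΔ : δ * Δx ≤ Δx / 2 := by nlinarith
  have hf : Tendsto (fun ε : ℝ => (((1 - ε) * x + ε * (7 / 8 * Δx),
      (1 - ε) * t + ε * (Δt / 2)) : ℝ × ℝ)) (𝓝[>] 0) (𝓝 (x, t)) := by
    have hcf : Continuous fun ε : ℝ => (((1 - ε) * x + ε * (7 / 8 * Δx),
        (1 - ε) * t + ε * (Δt / 2)) : ℝ × ℝ) := by fun_prop
    refine Tendsto.mono_left ?_ nhdsWithin_le_nhds
    have := hcf.tendsto 0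
    simpa using this
  refine mem_closure_of_tendsto hf ?_
  filter_upwards [Ioo_mem_nhdsGT_of_mem (by norm_num : (0:ℝ) ∈ Set.Ico 0 1)] with ε hε
  have hε0 : 0 < ε := hε.1
  have hε1 : ε < 1 := hε.2
  rw [mem_Cplus_iff' hΔx hΔt hδ0]
  have hb : |t - Δt / 2| ≤ Δt / 2 := by
    rw [abs_le]; constructor <;> [linarith [ht.1]; linarith [ht.2]]
  have hellnew : ell Δx Δt δ ((1 - ε) * t + ε * (Δt / 2))
      = (1 - ε) * ell Δx Δt δ t + ε * (δ * Δx) := by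
    rw [ell, ell, show (1 - ε) * t + ε * (Δt / 2) - Δt / 2 = (1 - ε) * (t - Δt / 2) by ring,
      abs_mul, abs_of_nonneg (by linarith : (0:ℝ) ≤ 1 - ε)]
    field_simp
    ring
  refine ⟨?_, ?_, ?_, ?_⟩
  · nlinarith [ht.1]
  · nlinarith [ht.2]
  · rw [hellnew]; nlinarith
  · nlinarith

end SliverAux
namespace SliverAux
variable {Δx Δt δ : ℝ}

/-- half-width of the excluded time interval at abscissa `x` -/
noncomputable def mfun (Δx Δt δ x : ℝ) : ℝ := max (Δt / 2 * (δ * Δx - x) / (δ * Δx)) 0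

lemma mfun_nonneg (x : ℝ) : 0 ≤ mfun Δx Δt δ x := le_max_right _ _

lemma mfun_lt (hΔx : 0 < Δx) (hΔt : 0 < Δt) (hδ0 : 0 < δ) {x : ℝ} (hx0 : 0 < x) :
    mfun Δx Δt δ x < Δt / 2 := by
  have ha : (0:ℝ) < δ * Δx := by positivity
  have hh : (0:ℝ) < Δt / 2 := by linarith
  refine max_lt ?_ hh
  rw [div_lt_iff₀ ha]
  nlinarith

lemma section_t_iff (hΔx : 0 < Δx) (hΔt : 0 < Δt) (hδ0 : 0 < δ) {x t : ℝ}
    (hx0 : 0 < x) (hxΔ : x < Δx) (htne : t ≠ Δt / 2) :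
    (x, t) ∈ Cplus Δx Δt δ ↔
      t ∈ Set.Ioo 0 (Δt / 2 - mfun Δx Δt δ x) ∪ Set.Ioo (Δt / 2 + mfun Δx Δt δ x) Δt := by
  have ha : (0:ℝ) < δ * Δx := by positivity
  have hh : (0:ℝ) < Δt / 2 := by linarith
  have hM0 : 0 ≤ mfun Δx Δt δ x := mfun_nonneg x
  have hMh : mfun Δx Δt δ x < Δt / 2 := mfun_lt hΔx hΔt hδ0 hx0
  rw [mem_Cplus_iff hΔx hΔt hδ0]
  simp only [Set.mem_union, Set.mem_Ioo]
  have habs : |t - Δt / 2| > mfun Δx Δt δ x ↔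
      (t < Δt / 2 - mfun Δx Δt δ x ∨ Δt / 2 + mfun Δx Δt δ x < t) := by
    rw [gt_iff_lt, lt_abs]
    constructor
    · rintro (h | h) <;> [right; left] <;> linarith
    · rintro (h | h) <;> [right; left] <;> linarith
  have hkey : δ * Δx * (Δt / 2) < |x| * (Δt / 2) + |t - Δt / 2| * (δ * Δx) ↔
      |t - Δt / 2| > mfun Δx Δt δ x := by
    rw [abs_of_pos hx0]
    rcases le_or_gt 0 (Δt / 2 * (δ * Δx - x) / (δ * Δx)) with hm | hm
    · rw [mfun, max_eq_left hm, gt_iff_lt, div_lt_iff₀ ha]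
      constructor <;> intro h <;> nlinarith
    · rw [mfun, max_eq_right hm.le]
      have hax : δ * Δx < x := by
        by_contra hcon
        push_neg at hcon
        have : 0 ≤ Δt / 2 * (δ * Δx - x) / (δ * Δx) :=
          div_nonneg (mul_nonneg hh.le (by linarith)) ha.le
        linarith
      have habs0 : 0 < |t - Δt / 2| := abs_pos.2 (sub_ne_zero.2 htne)
      constructor
      · intro _; exact habs0
      · intro _; nlinarith [abs_nonneg (t - Δt / 2)]
  constructor
  · rintro ⟨-, -, ht0, htΔ, hN⟩
    rcases habs.1 (hkey.1 hN) with h | h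
    · exact Or.inl ⟨ht0, h⟩
    · exact Or.inr ⟨h, htΔ⟩
  · rintro (⟨ht0, htm⟩ | ⟨htm, htΔ⟩)
    · exact ⟨hx0, hxΔ, ht0, by linarith, hkey.2 (habs.2 (Or.inl htm))⟩
    · exact ⟨hx0, hxΔ, by linarith, htΔ, hkey.2 (habs.2 (Or.inr htm))⟩

lemma ell_le_of_outside (hΔx : 0 < Δx) (hΔt : 0 < Δt) (hδ0 : 0 < δ) {x t : ℝ}
    (ht : t ∈ Set.Icc 0 Δt)
    (hout : t ≤ Δt / 2 - mfun Δx Δt δ x ∨ Δt / 2 + mfun Δx Δt δ x ≤ t) :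
    ell Δx Δt δ t ≤ x := by
  have ha : (0:ℝ) < δ * Δx := by positivity
  have hh : (0:ℝ) < Δt / 2 := by linarith
  have hbM : mfun Δx Δt δ x ≤ |t - Δt / 2| := by
    rcases hout with h | h
    · calc mfun Δx Δt δ x ≤ Δt / 2 - t := by linarith
        _ = -(t - Δt / 2) := by ring
        _ ≤ |t - Δt / 2| := neg_le_abs _
    · calc mfun Δx Δt δ x ≤ t - Δt / 2 := by linarith
        _ ≤ |t - Δt / 2| := le_abs_self _
  rw [ell, div_le_iff₀ hh]
  rcases le_or_gt 0 (Δt / 2 * (δ * Δx - x) / (δ * Δx)) with hm | hm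
  · have hM : mfun Δx Δt δ x = Δt / 2 * (δ * Δx - x) / (δ * Δx) := max_eq_left hm
    have ham : δ * Δx * (Δt / 2 * (δ * Δx - x) / (δ * Δx)) = Δt / 2 * (δ * Δx - x) := by
      field_simp
    nlinarith [hbM, hM]
  · have hax : δ * Δx < x := by
      by_contra hcon
      push_neg at hcon
      have : 0 ≤ Δt / 2 * (δ * Δx - x) / (δ * Δx) :=
        div_nonneg (mul_nonneg hh.le (by linarith)) ha.le
      linarith
    have hb0 : 0 ≤ |t - Δt / 2| := abs_nonneg _
    nlinarith

variable {q : ℝ × ℝ → ℝ} {U : Set (ℝ × ℝ)}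

lemma contOn_deriv (hU : IsOpen U) (hq : ContDiffOn ℝ 1 q U) (v : ℝ × ℝ) :
    ContinuousOn (fun p => 2 * q p * (fderiv ℝ q p) v) U := by
  have hfd : ContinuousOn (fderiv ℝ q) U := hq.continuousOn_fderiv_of_isOpen hU le_rfl
  have heval : ContinuousOn (fun p => (fderiv ℝ q p) v) U :=
    (ContinuousLinearMap.apply ℝ ℝ v).continuous.comp_continuousOn hfd
  exact (continuousOn_const.mul hq.continuousOn).mul heval

lemma ftc_x (hU : IsOpen U) (hq : ContDiffOn ℝ 1 q U) {A B t : ℝ} (hAB : A ≤ B)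
    (hmem : ∀ x ∈ Set.Icc A B, (x, t) ∈ U) :
    ∫ x in A..B, 2 * q (x, t) * (fderiv ℝ q (x, t)) (1, 0) = q (B, t) ^ 2 - q (A, t) ^ 2 := by
  have hmaps : Set.MapsTo (fun x : ℝ => ((x, t) : ℝ × ℝ)) (Set.uIcc A B) U := by
    intro y hy
    exact hmem y (by rwa [Set.uIcc_of_le hAB] at hy)
  have key : ∀ y ∈ Set.uIcc A B,
      HasDerivAt (fun x : ℝ => q (x, t) ^ 2) (2 * q (y, t) * (fderiv ℝ q (y, t)) (1, 0)) y := by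
    intro y hy
    have hyU : (y, t) ∈ U := hmaps hy
    have hdq : HasFDerivAt q (fderiv ℝ q (y, t)) (y, t) :=
      ((hq.differentiableOn one_ne_zero).differentiableAt (hU.mem_nhds hyU)).hasFDerivAt
    have hline : HasDerivAt (fun x : ℝ => ((x, t) : ℝ × ℝ)) (1, 0) y :=
      (hasDerivAt_id y).prodMk (hasDerivAt_const y t)
    have hcomp : HasDerivAt (fun x : ℝ => q (x, t)) ((fderiv ℝ q (y, t)) (1, 0)) y :=
      hdq.comp_hasDerivAt y hline
    have := hcomp.pow 2
    norm_num at this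
    exact this
  have hint : IntervalIntegrable (fun x : ℝ => 2 * q (x, t) * (fderiv ℝ q (x, t)) (1, 0))
      volume A B := by
    apply ContinuousOn.intervalIntegrable
    exact (contOn_deriv hU hq (1, 0)).comp
      (Continuous.continuousOn (by fun_prop)) hmaps
  exact intervalIntegral.integral_eq_sub_of_hasDerivAt key hint

lemma ftc_t (hU : IsOpen U) (hq : ContDiffOn ℝ 1 q U) {A B x : ℝ} (hAB : A ≤ B)
    (hmem : ∀ t ∈ Set.Icc A B, (x, t) ∈ U) :
    ∫ t in A..B, 2 * q (x, t) * (fderiv ℝ q (x, t)) (0, 1) = q (x, B) ^ 2 - q (x, A) ^ 2 := by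
  have hmaps : Set.MapsTo (fun t : ℝ => ((x, t) : ℝ × ℝ)) (Set.uIcc A B) U := by
    intro y hy
    exact hmem y (by rwa [Set.uIcc_of_le hAB] at hy)
  have key : ∀ y ∈ Set.uIcc A B,
      HasDerivAt (fun t : ℝ => q (x, t) ^ 2) (2 * q (x, y) * (fderiv ℝ q (x, y)) (0, 1)) y := by
    intro y hy
    have hyU : (x, y) ∈ U := hmaps hy
    have hdq : HasFDerivAt q (fderiv ℝ q (x, y)) (x, y) :=
      ((hq.differentiableOn one_ne_zero).differentiableAt (hU.mem_nhds hyU)).hasFDerivAt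
    have hline : HasDerivAt (fun t : ℝ => ((x, t) : ℝ × ℝ)) (0, 1) y :=
      (hasDerivAt_const y x).prodMk (hasDerivAt_id y)
    have hcomp : HasDerivAt (fun t : ℝ => q (x, t)) ((fderiv ℝ q (x, y)) (0, 1)) y :=
      hdq.comp_hasDerivAt y hline
    have := hcomp.pow 2
    norm_num at this
    exact this
  have hint : IntervalIntegrable (fun t : ℝ => 2 * q (x, t) * (fderiv ℝ q (x, t)) (0, 1))
      volume A B := by
    apply ContinuousOn.intervalIntegrable
    exact (contOn_deriv hU hq (0, 1)).comp
      (Continuous.continuousOn (by fun_prop)) hmaps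
  exact intervalIntegral.integral_eq_sub_of_hasDerivAt key hint

end SliverAux
namespace SliverAux
variable {Δx Δt δ : ℝ} {q : ℝ × ℝ → ℝ} {U : Set (ℝ × ℝ)}

lemma ell_continuous : Continuous (fun t => ell Δx Δt δ t) := by
  unfold ell
  fun_prop

lemma mfun_continuous : Continuous (fun x => mfun Δx Δt δ x) := by
  unfold mfun
  fun_prop

lemma mfun_le (hΔx : 0 < Δx) (hΔt : 0 < Δt) (hδ0 : 0 < δ) {x : ℝ} (hx0 : 0 ≤ x) :
    mfun Δx Δt δ x ≤ Δt / 2 := by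
  have ha : (0:ℝ) < δ * Δx := by positivity
  have hh : (0:ℝ) < Δt / 2 := by linarith
  refine max_le ?_ hh.le
  rw [div_le_iff₀ ha]
  nlinarith

lemma integrableOn_comp (hU : IsOpen U) (hq : ContDiffOn ℝ 1 q U) {g : ℝ → ℝ × ℝ} {A B : ℝ}
    (hg : Continuous g) (hmaps : ∀ s ∈ Set.Icc A B, g s ∈ U) :
    MeasureTheory.IntegrableOn (fun s => q (g s) ^ 2) (Set.Icc A B) := by
  have hc : ContinuousOn (fun s => q (g s) ^ 2) (Set.Icc A B) :=
    (hq.continuousOn.comp hg.continuousOn hmaps).pow 2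
  exact hc.integrableOn_compact isCompact_Icc

lemma intervalIntegrable_comp (hU : IsOpen U) (hq : ContDiffOn ℝ 1 q U) {g : ℝ → ℝ × ℝ}
    {A B : ℝ} (hAB : A ≤ B) (hg : Continuous g) (hmaps : ∀ s ∈ Set.Icc A B, g s ∈ U) :
    IntervalIntegrable (fun s => q (g s) ^ 2) MeasureTheory.volume A B := by
  apply ContinuousOn.intervalIntegrable
  rw [Set.uIcc_of_le hAB]
  exact (hq.continuousOn.comp hg.continuousOn hmaps).pow 2

end SliverAux

open MeasureTheory Set SliverAux

/-- Divergence identity on the control volume to the right of the sliver: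
for every `C¹` function `q` on a neighbourhood of the closure of `C⁺`,
`2∬_{C⁺} q(∂ₜq + ∂ₓq) dx dt
  = ∫₀^{Δx} q(x,Δt)² dx − ∫₀^{Δx} q(x,0)² dx + ∫₀^{Δt} q(Δx,t)² dt − {q²}⁺`. -/
theorem divergence_identity_Cplus (Δx Δt δ : ℝ)
    (hΔx : 0 < Δx) (hΔt : 0 < Δt) (hδ0 : 0 < δ) (hδ : δ ≤ 1 / 2)
    (q : ℝ × ℝ → ℝ) (U : Set (ℝ × ℝ)) (hU : IsOpen U)
    (hCU : closure (Cplus Δx Δt δ) ⊆ U) (hq : ContDiffOn ℝ 1 q U) :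
    2 * ∫ p in Cplus Δx Δt δ, q p * (dT q p + dX q p) =
      (∫ x in (0:ℝ)..Δx, (q (x, Δt)) ^ 2) - (∫ x in (0:ℝ)..Δx, (q (x, 0)) ^ 2)
      + (∫ t in (0:ℝ)..Δt, (q (Δx, t)) ^ 2)
      - pairPlus Δx Δt δ (fun p => (q p) ^ 2) := by
  have hh : (0:ℝ) < Δt / 2 := by linarith
  have ha : (0:ℝ) < δ * Δx := by positivity
  have haΔ : δ * Δx ≤ Δx / 2 := by nlinarith
  have hopen : IsOpen (Cplus Δx Δt δ) := (isOpen_Ioo.prod isOpen_Ioo).sdiff isClosed_closure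
  have hmeas : MeasurableSet (Cplus Δx Δt δ) := hopen.measurableSet
  set d1 : ℝ × ℝ → ℝ := fun p => 2 * q p * (fderiv ℝ q p) (1, 0) with hd1_def
  set d2 : ℝ × ℝ → ℝ := fun p => 2 * q p * (fderiv ℝ q p) (0, 1) with hd2_def
  have hd1cont : ContinuousOn d1 U := SliverAux.contOn_deriv hU hq (1, 0)
  have hd2cont : ContinuousOn d2 U := SliverAux.contOn_deriv hU hq (0, 1)
  have hKc : IsCompact (closure (Cplus Δx Δt δ)) := by
    refine (isCompact_Icc.prod isCompact_Icc :
        IsCompact ((Set.Icc 0 Δx) ×ˢ (Set.Icc 0 Δt))).of_isClosed_subset isClosed_closure ?_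
    refine closure_minimal ?_ (isClosed_Icc.prod isClosed_Icc)
    exact fun p hp => ⟨Ioo_subset_Icc_self hp.1.1, Ioo_subset_Icc_self hp.1.2⟩
  have hId1 : IntegrableOn d1 (Cplus Δx Δt δ) :=
    ((hd1cont.mono hCU).integrableOn_compact hKc).mono_set subset_closure
  have hId2 : IntegrableOn d2 (Cplus Δx Δt δ) :=
    ((hd2cont.mono hCU).integrableOn_compact hKc).mono_set subset_closure
  -- membership in `U` facts
  have hmemU : ∀ {x t : ℝ}, t ∈ Set.Icc 0 Δt → ell Δx Δt δ t ≤ x → x ≤ Δx → (x, t) ∈ U :=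
    fun ht hx hx' => hCU (mem_closure_Cplus hΔx hΔt hδ0 hδ ht hx hx')
  have hell0 : ell Δx Δt δ 0 = 0 := by
    rw [ell, show |(0:ℝ) - Δt / 2| = Δt / 2 by rw [abs_of_nonpos (by linarith)]; ring,
      show Δt / 2 - Δt / 2 = 0 by ring, mul_zero, zero_div]
  have hellΔt : ell Δx Δt δ Δt = 0 := by
    rw [ell, show |Δt - Δt / 2| = Δt / 2 by rw [abs_of_nonneg (by linarith)]; ring,
      show Δt / 2 - Δt / 2 = 0 by ring, mul_zero, zero_div]
  -- Fubini in x
  have hFubX : (∫ p in Cplus Δx Δt δ, d1 p)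
      = ∫ t in Set.Ioo (0:ℝ) Δt, (q (Δx, t) ^ 2 - q (ell Δx Δt δ t, t) ^ 2) := by
    have hind : Integrable (Set.indicator (Cplus Δx Δt δ) d1) :=
      (integrable_indicator_iff hmeas).2 hId1
    rw [← integral_indicator hmeas, ← integral_indicator measurableSet_Ioo]
    rw [MeasureTheory.Measure.volume_eq_prod] at hind ⊢
    rw [integral_prod_symm _ hind]
    refine integral_congr_ae (Filter.Eventually.of_forall fun t => ?_)
    beta_reduce
    by_cases hT : t ∈ Set.Ioo (0:ℝ) Δt
    · have hsec : (fun x : ℝ => Set.indicator (Cplus Δx Δt δ) d1 (x, t))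
          = fun x => Set.indicator (Set.Ioo (ell Δx Δt δ t) Δx) (fun x => d1 (x, t)) x := by
        funext x
        by_cases hx : (x, t) ∈ Cplus Δx Δt δ
        · rw [Set.indicator_of_mem hx, Set.indicator_of_mem]
          rcases (mem_Cplus_iff' hΔx hΔt hδ0).1 hx with ⟨_, _, h1, h2⟩
          exact ⟨h1, h2⟩
        · rw [Set.indicator_of_notMem hx, Set.indicator_of_notMem]
          intro hmem
          exact hx ((mem_Cplus_iff' hΔx hΔt hδ0).2 ⟨hT.1, hT.2, hmem.1, hmem.2⟩)
      rw [hsec, integral_indicator measurableSet_Ioo, Set.indicator_of_mem hT]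
      have hle : ell Δx Δt δ t ≤ Δx := le_trans (ell_le hΔx hΔt hδ0 t) (by linarith)
      rw [← MeasureTheory.integral_Ioc_eq_integral_Ioo, ← intervalIntegral.integral_of_le hle]
      exact ftc_x hU hq hle
        (fun x hx => hmemU ⟨hT.1.le, hT.2.le⟩ hx.1 hx.2)
    · have hzero : (fun x : ℝ => Set.indicator (Cplus Δx Δt δ) d1 (x, t))
          = fun _ => (0:ℝ) := by
        funext x
        apply Set.indicator_of_notMem
        intro hx
        rcases (mem_Cplus_iff' hΔx hΔt hδ0).1 hx with ⟨h1, h2, -, -⟩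
        exact hT ⟨h1, h2⟩
      rw [hzero, integral_zero, Set.indicator_of_notMem hT]
  -- Fubini in t
  have hFubT : (∫ p in Cplus Δx Δt δ, d2 p)
      = ∫ x in Set.Ioo (0:ℝ) Δx,
          ((q (x, Δt / 2 - mfun Δx Δt δ x) ^ 2 - q (x, 0) ^ 2)
            + (q (x, Δt) ^ 2 - q (x, Δt / 2 + mfun Δx Δt δ x) ^ 2)) := by
    have hind : Integrable (Set.indicator (Cplus Δx Δt δ) d2) :=
      (integrable_indicator_iff hmeas).2 hId2
    rw [← integral_indicator hmeas, ← integral_indicator measurableSet_Ioo]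
    rw [MeasureTheory.Measure.volume_eq_prod] at hind ⊢
    rw [integral_prod _ hind]
    refine integral_congr_ae (Filter.Eventually.of_forall fun x => ?_)
    beta_reduce
    by_cases hX : x ∈ Set.Ioo (0:ℝ) Δx
    · have hM0 : 0 ≤ mfun Δx Δt δ x := mfun_nonneg x
      have hMh : mfun Δx Δt δ x < Δt / 2 := mfun_lt hΔx hΔt hδ0 hX.1
      have hae1 : ∀ᵐ t : ℝ, t ≠ Δt / 2 := by simp [ae_iff]
      have hae : (fun t : ℝ => Set.indicator (Cplus Δx Δt δ) d2 (x, t))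
          =ᵐ[volume] fun t => Set.indicator
            (Set.Ioo 0 (Δt / 2 - mfun Δx Δt δ x) ∪ Set.Ioo (Δt / 2 + mfun Δx Δt δ x) Δt)
            (fun t => d2 (x, t)) t := by
        filter_upwards [hae1] with t ht
        by_cases hx : (x, t) ∈ Cplus Δx Δt δ
        · rw [Set.indicator_of_mem hx, Set.indicator_of_mem]
          exact (section_t_iff hΔx hΔt hδ0 hX.1 hX.2 ht).1 hx
        · rw [Set.indicator_of_notMem hx, Set.indicator_of_notMem]
          intro hmem
          exact hx ((section_t_iff hΔx hΔt hδ0 hX.1 hX.2 ht).2 hmem)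
      rw [integral_congr_ae hae,
        integral_indicator (measurableSet_Ioo.union measurableSet_Ioo),
        Set.indicator_of_mem hX]
      have hdisj : Disjoint (Set.Ioo (0:ℝ) (Δt / 2 - mfun Δx Δt δ x))
          (Set.Ioo (Δt / 2 + mfun Δx Δt δ x) Δt) := by
        refine Set.disjoint_left.2 fun t h1 h2 => ?_
        have := h1.2; have := h2.1; linarith
      have hmemlo : ∀ t ∈ Set.Icc (0:ℝ) (Δt / 2 - mfun Δx Δt δ x), (x, t) ∈ U := by
        intro t htt
        refine hmemU ⟨htt.1, by linarith [htt.2]⟩ ?_ hX.2.le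
        exact ell_le_of_outside hΔx hΔt hδ0 ⟨htt.1, by linarith [htt.2]⟩ (Or.inl htt.2)
      have hmemhi : ∀ t ∈ Set.Icc (Δt / 2 + mfun Δx Δt δ x) Δt, (x, t) ∈ U := by
        intro t htt
        refine hmemU ⟨by linarith [htt.1], htt.2⟩ ?_ hX.2.le
        exact ell_le_of_outside hΔx hΔt hδ0 ⟨by linarith [htt.1], htt.2⟩ (Or.inr htt.1)
      have hint1 : IntegrableOn (fun t => d2 (x, t))
          (Set.Ioo (0:ℝ) (Δt / 2 - mfun Δx Δt δ x)) := by
        have hc : ContinuousOn (fun t : ℝ => d2 (x, t)) (Set.Icc 0 (Δt / 2 - mfun Δx Δt δ x)) :=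
          hd2cont.comp (Continuous.continuousOn (by fun_prop)) hmemlo
        exact (hc.integrableOn_compact isCompact_Icc).mono_set Set.Ioo_subset_Icc_self
      have hint2 : IntegrableOn (fun t => d2 (x, t))
          (Set.Ioo (Δt / 2 + mfun Δx Δt δ x) Δt) := by
        have hc : ContinuousOn (fun t : ℝ => d2 (x, t))
            (Set.Icc (Δt / 2 + mfun Δx Δt δ x) Δt) :=
          hd2cont.comp (Continuous.continuousOn (by fun_prop)) hmemhi
        exact (hc.integrableOn_compact isCompact_Icc).mono_set Set.Ioo_subset_Icc_self
      rw [setIntegral_union hdisj measurableSet_Ioo hint1 hint2]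
      have e1 : (∫ t in Set.Ioo (0:ℝ) (Δt / 2 - mfun Δx Δt δ x), d2 (x, t))
          = q (x, Δt / 2 - mfun Δx Δt δ x) ^ 2 - q (x, 0) ^ 2 := by
        rw [← MeasureTheory.integral_Ioc_eq_integral_Ioo,
          ← intervalIntegral.integral_of_le (by linarith : (0:ℝ) ≤ Δt / 2 - mfun Δx Δt δ x)]
        exact ftc_t hU hq (by linarith) hmemlo
      have e2 : (∫ t in Set.Ioo (Δt / 2 + mfun Δx Δt δ x) Δt, d2 (x, t))
          = q (x, Δt) ^ 2 - q (x, Δt / 2 + mfun Δx Δt δ x) ^ 2 := by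
        rw [← MeasureTheory.integral_Ioc_eq_integral_Ioo,
          ← intervalIntegral.integral_of_le (by linarith : Δt / 2 + mfun Δx Δt δ x ≤ Δt)]
        exact ftc_t hU hq (by linarith) hmemhi
      rw [e1, e2]
    · have hzero : (fun t : ℝ => Set.indicator (Cplus Δx Δt δ) d2 (x, t))
          = fun _ => (0:ℝ) := by
        funext t
        apply Set.indicator_of_notMem
        intro hx
        rcases (mem_Cplus_iff' hΔx hΔt hδ0).1 hx with ⟨h1, h2, h3, h4⟩
        exact hX ⟨lt_of_le_of_lt (ell_nonneg hΔx hΔt hδ0 ⟨h1.le, h2.le⟩) h3, h4⟩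
      rw [hzero, integral_zero, Set.indicator_of_notMem hX]
  -- split the divergence integral
  have hsplit : 2 * (∫ p in Cplus Δx Δt δ, q p * (dT q p + dX q p))
      = (∫ p in Cplus Δx Δt δ, d1 p) + (∫ p in Cplus Δx Δt δ, d2 p) := by
    rw [← integral_add hId1 hId2, ← integral_const_mul]
    refine integral_congr_ae (Filter.Eventually.of_forall fun p => ?_)
    show 2 * (q p * (dT q p + dX q p)) = d1 p + d2 p
    simp only [dT, dX, hd1_def, hd2_def]
    ring
  -- abbreviations for the two sliver-face integrals
  set A : ℝ := ∫ s in (0:ℝ)..1, q (s * (δ * Δx), s * (Δt / 2)) ^ 2 with hA_def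
  set B : ℝ := ∫ s in (0:ℝ)..1, q ((1 - s) * (δ * Δx), (1 + s) * (Δt / 2)) ^ 2 with hB_def
  have hPair : pairPlus Δx Δt δ (fun p => (q p) ^ 2)
      = A * (Δt / 2 - δ * Δx) + B * (Δt / 2 + δ * Δx) := by
    rw [hA_def, hB_def, pairPlus]
    rw [intervalIntegral.integral_mul_const, intervalIntegral.integral_mul_const]
  -- curves
  have hcurve_R : ∀ t ∈ Set.Icc (0:ℝ) Δt, ((Δx, t) : ℝ × ℝ) ∈ U := fun t ht =>
    hmemU ht (le_trans (ell_le hΔx hΔt hδ0 t) (by linarith)) le_rfl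
  have hcurve_L : ∀ t ∈ Set.Icc (0:ℝ) Δt, ((ell Δx Δt δ t, t) : ℝ × ℝ) ∈ U := fun t ht =>
    hmemU ht le_rfl (le_trans (ell_le hΔx hΔt hδ0 t) (by linarith))
  have hIR : IntegrableOn (fun t => q (Δx, t) ^ 2) (Set.Icc 0 Δt) :=
    integrableOn_comp hU hq (by fun_prop) hcurve_R
  have hIL : IntegrableOn (fun t => q (ell Δx Δt δ t, t) ^ 2) (Set.Icc 0 Δt) :=
    integrableOn_comp hU hq (ell_continuous.prodMk continuous_id) hcurve_L
  have hIG1 : IntervalIntegrable (fun t => q (ell Δx Δt δ t, t) ^ 2) volume 0 (Δt / 2) :=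
    intervalIntegrable_comp hU hq hh.le (ell_continuous.prodMk continuous_id)
      (fun t ht => hcurve_L t ⟨ht.1, by linarith [ht.2]⟩)
  have hIG2 : IntervalIntegrable (fun t => q (ell Δx Δt δ t, t) ^ 2) volume (Δt / 2) Δt :=
    intervalIntegrable_comp hU hq (by linarith) (ell_continuous.prodMk continuous_id)
      (fun t ht => hcurve_L t ⟨by linarith [ht.1], ht.2⟩)
  -- substitution on the lower-right sliver edge, time parametrization
  have hS1 : (∫ t in (0:ℝ)..(Δt / 2), q (ell Δx Δt δ t, t) ^ 2) = (Δt / 2) * A := by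
    have hc1 : Set.EqOn (fun s : ℝ => q (s * (δ * Δx), s * (Δt / 2)) ^ 2)
        (fun s : ℝ => q (ell Δx Δt δ (s * (Δt / 2)), s * (Δt / 2)) ^ 2) (Set.uIcc 0 1) := by
      intro s hs
      rw [Set.uIcc_of_le (by norm_num : (0:ℝ) ≤ 1)] at hs
      have he : ell Δx Δt δ (s * (Δt / 2)) = s * (δ * Δx) := by
        rw [ell, show s * (Δt / 2) - Δt / 2 = -((1 - s) * (Δt / 2)) by ring, abs_neg,
          abs_of_nonneg (mul_nonneg (by linarith [hs.2]) hh.le)]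
        field_simp
        ring
      simp only [he]
    have hcmp := intervalIntegral.integral_comp_mul_right (a := 0) (b := 1)
      (fun t : ℝ => q (ell Δx Δt δ t, t) ^ 2) hh.ne'
    simp only [zero_mul, one_mul, smul_eq_mul] at hcmp
    rw [hA_def, intervalIntegral.integral_congr hc1, hcmp, ← mul_assoc,
      mul_inv_cancel₀ hh.ne', one_mul]
  -- substitution on the upper-right sliver edge, time parametrization
  have hS2 : (∫ t in (Δt / 2)..Δt, q (ell Δx Δt δ t, t) ^ 2) = (Δt / 2) * B := by
    have hc2 : Set.EqOn (fun s : ℝ => q ((1 - s) * (δ * Δx), (1 + s) * (Δt / 2)) ^ 2)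
        (fun s : ℝ => q (ell Δx Δt δ (Δt / 2 * s + Δt / 2), Δt / 2 * s + Δt / 2) ^ 2)
        (Set.uIcc 0 1) := by
      intro s hs
      rw [Set.uIcc_of_le (by norm_num : (0:ℝ) ≤ 1)] at hs
      have he : ell Δx Δt δ (Δt / 2 * s + Δt / 2) = (1 - s) * (δ * Δx) := by
        rw [ell, show Δt / 2 * s + Δt / 2 - Δt / 2 = s * (Δt / 2) by ring,
          abs_of_nonneg (mul_nonneg hs.1 hh.le)]
        field_simp
      have ht2 : (1 + s) * (Δt / 2) = Δt / 2 * s + Δt / 2 := by ring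
      simp only [he, ht2]
    have hcmp := intervalIntegral.integral_comp_mul_add (a := 0) (b := 1)
      (fun t : ℝ => q (ell Δx Δt δ t, t) ^ 2) hh.ne' (Δt / 2)
    simp only [mul_zero, mul_one, zero_add, smul_eq_mul] at hcmp
    rw [show Δt / 2 + Δt / 2 = Δt by ring] at hcmp
    rw [hB_def, intervalIntegral.integral_congr hc2, hcmp, ← mul_assoc,
      mul_inv_cancel₀ hh.ne', one_mul]
  have hX1 : (∫ p in Cplus Δx Δt δ, d1 p)
      = (∫ t in (0:ℝ)..Δt, q (Δx, t) ^ 2) - ((Δt / 2) * A + (Δt / 2) * B) := by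
    rw [hFubX, integral_sub (hIR.mono_set Set.Ioo_subset_Icc_self)
      (hIL.mono_set Set.Ioo_subset_Icc_self)]
    congr 1
    · rw [intervalIntegral.integral_of_le hΔt.le, MeasureTheory.integral_Ioc_eq_integral_Ioo]
    · rw [← hS1, ← hS2, intervalIntegral.integral_add_adjacent_intervals hIG1 hIG2,
        intervalIntegral.integral_of_le hΔt.le, MeasureTheory.integral_Ioc_eq_integral_Ioo]
  have haΔx : δ * Δx ≤ Δx := by linarith
  -- curves for the t-direction boundary terms
  have htlo_mem : ∀ x ∈ Set.Icc (0:ℝ) Δx, ((x, Δt / 2 - mfun Δx Δt δ x) : ℝ × ℝ) ∈ U := by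
    intro x hx
    have hM0 := mfun_nonneg (Δx := Δx) (Δt := Δt) (δ := δ) x
    have hMle := mfun_le hΔx hΔt hδ0 hx.1
    have htIcc : Δt / 2 - mfun Δx Δt δ x ∈ Set.Icc (0:ℝ) Δt := ⟨by linarith, by linarith⟩
    exact hmemU htIcc (ell_le_of_outside hΔx hΔt hδ0 htIcc (Or.inl le_rfl)) hx.2
  have hthi_mem : ∀ x ∈ Set.Icc (0:ℝ) Δx, ((x, Δt / 2 + mfun Δx Δt δ x) : ℝ × ℝ) ∈ U := by
    intro x hx
    have hM0 := mfun_nonneg (Δx := Δx) (Δt := Δt) (δ := δ) x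
    have hMle := mfun_le hΔx hΔt hδ0 hx.1
    have htIcc : Δt / 2 + mfun Δx Δt δ x ∈ Set.Icc (0:ℝ) Δt := ⟨by linarith, by linarith⟩
    exact hmemU htIcc (ell_le_of_outside hΔx hΔt hδ0 htIcc (Or.inr le_rfl)) hx.2
  have hIlo : IntegrableOn (fun x => q (x, Δt / 2 - mfun Δx Δt δ x) ^ 2) (Set.Icc 0 Δx) :=
    integrableOn_comp hU hq (continuous_id.prodMk (continuous_const.sub mfun_continuous))
      htlo_mem
  have hIhi : IntegrableOn (fun x => q (x, Δt / 2 + mfun Δx Δt δ x) ^ 2) (Set.Icc 0 Δx) :=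
    integrableOn_comp hU hq (continuous_id.prodMk (continuous_const.add mfun_continuous))
      hthi_mem
  have hI0 : IntegrableOn (fun x => q (x, 0) ^ 2) (Set.Icc 0 Δx) :=
    integrableOn_comp hU hq (by fun_prop)
      (fun x hx => hmemU ⟨le_refl 0, hΔt.le⟩ (by rw [hell0]; exact hx.1) hx.2)
  have hIT : IntegrableOn (fun x => q (x, Δt) ^ 2) (Set.Icc 0 Δx) :=
    integrableOn_comp hU hq (by fun_prop)
      (fun x hx => hmemU ⟨hΔt.le, le_rfl⟩ (by rw [hellΔt]; exact hx.1) hx.2)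
  -- the middle (degenerate) part, where `mfun = 0`
  have hmfun0 : ∀ x ∈ Set.Ico (δ * Δx) Δx, mfun Δx Δt δ x = 0 := by
    intro x hx
    have : Δt / 2 * (δ * Δx - x) / (δ * Δx) ≤ 0 :=
      div_nonpos_of_nonpos_of_nonneg (by nlinarith [hx.1]) ha.le
    exact max_eq_right this
  have hdisj2 : Disjoint (Set.Ioo (0:ℝ) (δ * Δx)) (Set.Ico (δ * Δx) Δx) :=
    Set.disjoint_left.2 fun y h1 h2 => absurd h2.1 (not_le.2 h1.2)
  have hunion : Set.Ioo (0:ℝ) (δ * Δx) ∪ Set.Ico (δ * Δx) Δx = Set.Ioo (0:ℝ) Δx :=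
    Set.Ioo_union_Ico_eq_Ioo ha (by linarith)
  have hsub1 : Set.Ioo (0:ℝ) (δ * Δx) ⊆ Set.Icc 0 Δx :=
    (Set.Ioo_subset_Ioo_right haΔx).trans Set.Ioo_subset_Icc_self
  have hsub2 : Set.Ico (δ * Δx) Δx ⊆ Set.Icc 0 Δx :=
    fun y hy => ⟨le_trans ha.le hy.1, hy.2.le⟩
  have htloInt : (∫ x in Set.Ioo (0:ℝ) Δx, q (x, Δt / 2 - mfun Δx Δt δ x) ^ 2)
      = (δ * Δx) * A + (∫ x in Set.Ico (δ * Δx) Δx, q (x, Δt / 2) ^ 2) := by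
    rw [← hunion, setIntegral_union hdisj2 measurableSet_Ico (hIlo.mono_set hsub1)
      (hIlo.mono_set hsub2)]
    congr 1
    · rw [← MeasureTheory.integral_Ioc_eq_integral_Ioo,
        ← intervalIntegral.integral_of_le ha.le]
      have hc3 : Set.EqOn (fun s : ℝ => q (s * (δ * Δx), s * (Δt / 2)) ^ 2)
          (fun s : ℝ => q (s * (δ * Δx), Δt / 2 - mfun Δx Δt δ (s * (δ * Δx))) ^ 2)
          (Set.uIcc 0 1) := by
        intro s hs
        rw [Set.uIcc_of_le (by norm_num : (0:ℝ) ≤ 1)] at hs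
        have hmf : mfun Δx Δt δ (s * (δ * Δx)) = (1 - s) * (Δt / 2) := by
          rw [mfun, show Δt / 2 * (δ * Δx - s * (δ * Δx)) / (δ * Δx) = (1 - s) * (Δt / 2) by
            field_simp]
          exact max_eq_left (mul_nonneg (by linarith [hs.2]) hh.le)
        simp only [hmf]
        rw [show Δt / 2 - (1 - s) * (Δt / 2) = s * (Δt / 2) by ring]
      have hcmp := intervalIntegral.integral_comp_mul_right (a := 0) (b := 1)
        (fun x : ℝ => q (x, Δt / 2 - mfun Δx Δt δ x) ^ 2) ha.ne'
      simp only [zero_mul, one_mul, smul_eq_mul] at hcmp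
      rw [hA_def, intervalIntegral.integral_congr hc3, hcmp, ← mul_assoc,
        mul_inv_cancel₀ ha.ne', one_mul]
    · refine setIntegral_congr_fun measurableSet_Ico fun x hx => ?_
      rw [hmfun0 x hx, sub_zero]
  have hthiInt : (∫ x in Set.Ioo (0:ℝ) Δx, q (x, Δt / 2 + mfun Δx Δt δ x) ^ 2)
      = (δ * Δx) * B + (∫ x in Set.Ico (δ * Δx) Δx, q (x, Δt / 2) ^ 2) := by
    rw [← hunion, setIntegral_union hdisj2 measurableSet_Ico (hIhi.mono_set hsub1)
      (hIhi.mono_set hsub2)]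
    congr 1
    · rw [← MeasureTheory.integral_Ioc_eq_integral_Ioo,
        ← intervalIntegral.integral_of_le ha.le]
      have hc4 : Set.EqOn (fun s : ℝ => q ((1 - s) * (δ * Δx), (1 + s) * (Δt / 2)) ^ 2)
          (fun s : ℝ => q ((1 - s) * (δ * Δx),
            Δt / 2 + mfun Δx Δt δ ((1 - s) * (δ * Δx))) ^ 2) (Set.uIcc 0 1) := by
        intro s hs
        rw [Set.uIcc_of_le (by norm_num : (0:ℝ) ≤ 1)] at hs
        have hmf : mfun Δx Δt δ ((1 - s) * (δ * Δx)) = s * (Δt / 2) := by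
          rw [mfun, show Δt / 2 * (δ * Δx - (1 - s) * (δ * Δx)) / (δ * Δx) = s * (Δt / 2) by
            field_simp; ring]
          exact max_eq_left (mul_nonneg hs.1 hh.le)
        simp only [hmf]
        rw [show Δt / 2 + s * (Δt / 2) = (1 + s) * (Δt / 2) by ring]
      have hrefl := intervalIntegral.integral_comp_sub_left (a := 0) (b := 1)
        (fun u : ℝ => q (u * (δ * Δx), Δt / 2 + mfun Δx Δt δ (u * (δ * Δx))) ^ 2) 1
      norm_num at hrefl
      have hcmp := intervalIntegral.integral_comp_mul_right (a := 0) (b := 1)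
        (fun x : ℝ => q (x, Δt / 2 + mfun Δx Δt δ x) ^ 2) ha.ne'
      simp only [zero_mul, one_mul, smul_eq_mul] at hcmp
      rw [hB_def, intervalIntegral.integral_congr hc4, hrefl, hcmp, ← mul_assoc,
        mul_inv_cancel₀ ha.ne', one_mul]
    · refine setIntegral_congr_fun measurableSet_Ico fun x hx => ?_
      rw [hmfun0 x hx, add_zero]
  have h0cvt : (∫ x in Set.Ioo (0:ℝ) Δx, q (x, 0) ^ 2) = ∫ x in (0:ℝ)..Δx, q (x, 0) ^ 2 := by
    rw [intervalIntegral.integral_of_le hΔx.le, MeasureTheory.integral_Ioc_eq_integral_Ioo]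
  have hTcvt : (∫ x in Set.Ioo (0:ℝ) Δx, q (x, Δt) ^ 2) = ∫ x in (0:ℝ)..Δx, q (x, Δt) ^ 2 := by
    rw [intervalIntegral.integral_of_le hΔx.le, MeasureTheory.integral_Ioc_eq_integral_Ioo]
  have hX2 : (∫ p in Cplus Δx Δt δ, d2 p)
      = (((δ * Δx) * A + (∫ x in Set.Ico (δ * Δx) Δx, q (x, Δt / 2) ^ 2))
          - (∫ x in (0:ℝ)..Δx, q (x, 0) ^ 2))
        + ((∫ x in (0:ℝ)..Δx, q (x, Δt) ^ 2)
          - ((δ * Δx) * B + (∫ x in Set.Ico (δ * Δx) Δx, q (x, Δt / 2) ^ 2))) := by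
    have hIadd1 : IntegrableOn
        (fun x => q (x, Δt / 2 - mfun Δx Δt δ x) ^ 2 - q (x, 0) ^ 2) (Set.Ioo 0 Δx) :=
      (hIlo.mono_set Set.Ioo_subset_Icc_self).sub (hI0.mono_set Set.Ioo_subset_Icc_self)
    have hIadd2 : IntegrableOn
        (fun x => q (x, Δt) ^ 2 - q (x, Δt / 2 + mfun Δx Δt δ x) ^ 2) (Set.Ioo 0 Δx) :=
      (hIT.mono_set Set.Ioo_subset_Icc_self).sub (hIhi.mono_set Set.Ioo_subset_Icc_self)
    rw [hFubT,
      integral_add hIadd1 hIadd2,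
      integral_sub (hIlo.mono_set Set.Ioo_subset_Icc_self)
        (hI0.mono_set Set.Ioo_subset_Icc_self),
      integral_sub (hIT.mono_set Set.Ioo_subset_Icc_self)
        (hIhi.mono_set Set.Ioo_subset_Icc_self),
      htloInt, hthiInt, h0cvt, hTcvt]
  rw [hsplit, hX1, hX2, hPair]
  ring
end

section
/- (Unconditional L² stability of the implicit ADER-DG method on a classical fixed geometry.) Let N ≥ 0 and M ≥ 1 be integers and Δx, Δt > 0. Suppose that bivariate polynomials q_j of total degree ≤ N, one on each control volume C_j, satisfy, for every bivariate polynomial test function θ of total degree ≤ N and every cell index j: ∫_{Ω_j} θ(x,Δt) q_j(x,Δt) dx − ∬_{C_j} (∂_tθ + ∂_xθ) q_j dx dt + ∫₀^{Δt} θ((j+1)Δx, t) q_j((j+1)Δx, t) dt − ∫₀^{Δt} θ(jΔx, t) q_{j−1}(jΔx, t) dt = ∫_{Ω_j} θ(x,0) u_j(x) dx, where q_{j−1} is the solution on the left neighbouring control volume. Then Σ_j ∫_{Ω_j} q_j(x,Δt)² dx ≤ Σ_j ∫_{Ω_j} u_j(x)² dx; i.e., the implicit ADER-DG method for the linear advection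 equation ∂_t u + ∂_x u = 0 on a fixed uniform periodic grid is L² stable for every time step Δt > 0 (unconditional stability). -/
open MeasureTheory

/-- Evaluation of a bivariate polynomial `P` at the spacetime point `(x, t)`
(variable `0` is space, variable `1` is time); each cell is described in the
reference coordinates `(0,Δx)×(0,Δt)` of its own spacetime control volume. -/
noncomputable def evalP (P : MvPolynomial (Fin 2) ℝ) (x t : ℝ) : ℝ :=
  MvPolynomial.eval ![x, t] P

lemma continuous_evalP (P : MvPolynomial (Fin 2) ℝ) :
    Continuous fun p : ℝ × ℝ => evalP P p.1 p.2 := by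
  have h1 : Continuous fun p : ℝ × ℝ => (![p.1, p.2] : Fin 2 → ℝ) := by
    apply continuous_pi
    intro i
    fin_cases i <;> simp [continuous_fst, continuous_snd]
  exact (MvPolynomial.continuous_eval P).comp h1

lemma continuous_evalP_x (P : MvPolynomial (Fin 2) ℝ) (t : ℝ) :
    Continuous fun x : ℝ => evalP P x t := by
  have h1 : Continuous fun x : ℝ => (![x, t] : Fin 2 → ℝ) := by
    apply continuous_pi
    intro i
    fin_cases i <;> simp <;> first | exact continuous_id | exact continuous_const
  exact (MvPolynomial.continuous_eval P).comp h1

lemma continuous_evalP_t (P : MvPolynomial (Fin 2) ℝ) (x : ℝ) :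
    Continuous fun t : ℝ => evalP P x t := by
  have h1 : Continuous fun t : ℝ => (![x, t] : Fin 2 → ℝ) := by
    apply continuous_pi
    intro i
    fin_cases i <;> simp <;> first | exact continuous_id | exact continuous_const
  exact (MvPolynomial.continuous_eval P).comp h1

lemma hasDerivAt_evalP_x (P : MvPolynomial (Fin 2) ℝ) (t x : ℝ) :
    HasDerivAt (fun x => evalP P x t) (evalP (MvPolynomial.pderiv 0 P) x t) x := by
  induction P using MvPolynomial.induction_on with
  | C a => simpa [evalP] using hasDerivAt_const x a
  | add p q hp hq => simpa [evalP, Pi.add_def] using hp.add hq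
  | mul_X p i hp =>
    fin_cases i <;> simp only [Fin.mk_zero, Fin.mk_one]
    · have := hp.mul (hasDerivAt_id x)
      simp only [evalP, map_mul, MvPolynomial.eval_X, MvPolynomial.pderiv_mul,
        MvPolynomial.pderiv_X_self, mul_one, map_add, Matrix.cons_val_zero] at this ⊢
      first
      | exact this
      | (convert this using 1; ring)
    · have := hp.mul_const t
      simp only [evalP, map_mul, MvPolynomial.eval_X, MvPolynomial.pderiv_mul,
        map_add, Matrix.cons_val_one, Matrix.head_cons] at this ⊢
      rw [MvPolynomial.pderiv_X]
      simp [this]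

lemma hasDerivAt_evalP_t (P : MvPolynomial (Fin 2) ℝ) (x t : ℝ) :
    HasDerivAt (fun t => evalP P x t) (evalP (MvPolynomial.pderiv 1 P) x t) t := by
  induction P using MvPolynomial.induction_on with
  | C a => simpa [evalP] using hasDerivAt_const t a
  | add p q hp hq => simpa [evalP, Pi.add_def] using hp.add hq
  | mul_X p i hp =>
    fin_cases i <;> simp only [Fin.mk_zero, Fin.mk_one]
    · have := hp.mul_const x
      simp only [evalP, map_mul, MvPolynomial.eval_X, MvPolynomial.pderiv_mul,
        map_add, Matrix.cons_val_zero] at this ⊢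
      rw [MvPolynomial.pderiv_X]
      simp [this]
    · have := hp.mul (hasDerivAt_id t)
      simp only [evalP, map_mul, MvPolynomial.eval_X, MvPolynomial.pderiv_mul,
        MvPolynomial.pderiv_X_self, mul_one, map_add, Matrix.cons_val_one,
        Matrix.head_cons] at this ⊢
      first
      | exact this
      | (convert this using 1; ring)

lemma ftc_sq_t (P : MvPolynomial (Fin 2) ℝ) (x a b : ℝ) :
    ∫ t in a..b, evalP (MvPolynomial.pderiv 1 P) x t * evalP P x t
      = (evalP P x b ^ 2 - evalP P x a ^ 2) / 2 := by
  have h : ∀ t ∈ Set.uIcc a b, HasDerivAt (fun t => evalP P x t ^ 2 / 2)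
      (evalP (MvPolynomial.pderiv 1 P) x t * evalP P x t) t := by
    intro t _
    have := ((hasDerivAt_evalP_t P x t).mul (hasDerivAt_evalP_t P x t)).div_const 2
    convert this using 1
    · rfl
    · rfl
    · ext s; simp only [Pi.mul_apply]; ring
    · ring
  rw [intervalIntegral.integral_eq_sub_of_hasDerivAt h
    (((continuous_evalP_t (MvPolynomial.pderiv 1 P) x).mul
      (continuous_evalP_t P x)).intervalIntegrable a b)]
  ring

lemma ftc_sq_x (P : MvPolynomial (Fin 2) ℝ) (t a b : ℝ) :
    ∫ x in a..b, evalP (MvPolynomial.pderiv 0 P) x t * evalP P x t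
      = (evalP P b t ^ 2 - evalP P a t ^ 2) / 2 := by
  have h : ∀ x ∈ Set.uIcc a b, HasDerivAt (fun x => evalP P x t ^ 2 / 2)
      (evalP (MvPolynomial.pderiv 0 P) x t * evalP P x t) x := by
    intro x _
    have := ((hasDerivAt_evalP_x P t x).mul (hasDerivAt_evalP_x P t x)).div_const 2
    convert this using 1
    · rfl
    · rfl
    · ext s; simp only [Pi.mul_apply]; ring
    · ring
  rw [intervalIntegral.integral_eq_sub_of_hasDerivAt h
    (((continuous_evalP_x (MvPolynomial.pderiv 0 P) t).mul
      (continuous_evalP_x P t)).intervalIntegrable a b)]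
  ring

lemma swap_int {f : ℝ → ℝ → ℝ} (hf : Continuous fun p : ℝ × ℝ => f p.1 p.2)
    {a b : ℝ} (ha : 0 ≤ a) (hb : 0 ≤ b) :
    ∫ x in (0:ℝ)..a, ∫ t in (0:ℝ)..b, f x t
      = ∫ t in (0:ℝ)..b, ∫ x in (0:ℝ)..a, f x t := by
  have huf : Continuous (Function.uncurry f) := hf
  have hint : MeasureTheory.Integrable (Function.uncurry f)
      ((volume.restrict (Set.Ioc (0:ℝ) a)).prod (volume.restrict (Set.Ioc (0:ℝ) b))) := by
    rw [MeasureTheory.Measure.prod_restrict]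
    have h1 : MeasureTheory.IntegrableOn (Function.uncurry f)
        (Set.Icc (0:ℝ) a ×ˢ Set.Icc (0:ℝ) b) ((volume : Measure ℝ).prod volume) :=
      ContinuousOn.integrableOn_compact (isCompact_Icc.prod isCompact_Icc) huf.continuousOn
    exact h1.mono_set (Set.prod_mono Set.Ioc_subset_Icc_self Set.Ioc_subset_Icc_self)
  have key := MeasureTheory.integral_integral_swap hint
  simp only [intervalIntegral.integral_of_le ha, intervalIntegral.integral_of_le hb]
  exact key

lemma mod_left_inv {M : ℕ} (hM : 1 ≤ M) {a : ℕ} (ha : a < M) :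
    ((a + M - 1) % M + 1) % M = a := by
  rcases a with _ | n
  · have h0 : 0 + M - 1 = M - 1 := by omega
    rw [h0]
    have h1 : (M - 1) % M = M - 1 := Nat.mod_eq_of_lt (by omega)
    rw [h1]
    have : M - 1 + 1 = M := by omega
    rw [this, Nat.mod_self]
  · have h1 : n + 1 + M - 1 = n + M := by omega
    rw [h1, Nat.add_mod_right]
    have h2 : n % M = n := Nat.mod_eq_of_lt (by omega)
    rw [h2, Nat.mod_eq_of_lt ha]

lemma mod_right_inv {M : ℕ} (hM : 1 ≤ M) {k : ℕ} (hk : k < M) :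
    ((k + 1) % M + M - 1) % M = k := by
  rcases Nat.lt_or_ge (k + 1) M with h | h
  · rw [Nat.mod_eq_of_lt h]
    have h1 : k + 1 + M - 1 = k + M := by omega
    rw [h1, Nat.add_mod_right, Nat.mod_eq_of_lt hk]
  · have hkM : k + 1 = M := by omega
    rw [hkM, Nat.mod_self]
    have h1 : 0 + M - 1 = M - 1 := by omega
    rw [h1, Nat.mod_eq_of_lt (by omega)]
    omega

lemma sum_mod_shift {M : ℕ} (hM : 1 ≤ M) (g : ℕ → ℝ) :
    ∑ j ∈ Finset.range M, g ((j + M - 1) % M) = ∑ j ∈ Finset.range M, g j := by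
  refine Finset.sum_nbij' (fun j => (j + M - 1) % M) (fun k => (k + 1) % M) ?_ ?_ ?_ ?_ ?_
  · intro a ha
    exact Finset.mem_range.mpr (Nat.mod_lt _ (by omega))
  · intro a ha
    exact Finset.mem_range.mpr (Nat.mod_lt _ (by omega))
  · intro a ha
    exact mod_left_inv hM (Finset.mem_range.mp ha)
  · intro a ha
    exact mod_right_inv hM (Finset.mem_range.mp ha)
  · intro a ha
    rfl

/-- Unconditional L² stability of the implicit ADER-DG method for the linear
advection equation `∂ₜu + ∂ₓu = 0` on a classical fixed uniform `MΔx`-periodic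
geometry.  If the bivariate polynomials `q j` of total degree `≤ N` on each
control volume `C_j = Ω_j × (0,Δt)` satisfy, for every test polynomial `θ` of
total degree `≤ N`,
`∫_{Ω_j} θ(x,Δt)q_j(x,Δt)dx − ∬_{C_j}(∂ₜθ+∂ₓθ)q_j dxdt
  + ∫₀^{Δt} θ|_{right} q_j|_{right} dt − ∫₀^{Δt} θ|_{left} q_{j−1}|_{right} dt
  = ∫_{Ω_j} θ(x,0)u_j(x)dx`
(the upwind fluxes on the vertical interfaces, the left neighbour taken
periodically), then `Σ_j ∫ q_j(·,Δt)² ≤ Σ_j ∫ u_j²` for every `Δt > 0`. -/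
theorem implicit_ADERDG_unconditional_L2_stability
    (N M : ℕ) (hM : 1 ≤ M) (Δx Δt : ℝ) (hΔx : 0 < Δx) (hΔt : 0 < Δt)
    (q : ℕ → MvPolynomial (Fin 2) ℝ) (u : ℕ → Polynomial ℝ)
    (hqdeg : ∀ j, (q j).totalDegree ≤ N)
    (hudeg : ∀ j, (u j).natDegree ≤ N)
    (hscheme : ∀ j < M, ∀ θ : MvPolynomial (Fin 2) ℝ, θ.totalDegree ≤ N →
      (∫ x in (0:ℝ)..Δx, evalP θ x Δt * evalP (q j) x Δt)
        - (∫ x in (0:ℝ)..Δx, ∫ t in (0:ℝ)..Δt,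
            (evalP (MvPolynomial.pderiv 1 θ) x t
              + evalP (MvPolynomial.pderiv 0 θ) x t) * evalP (q j) x t)
        + (∫ t in (0:ℝ)..Δt, evalP θ Δx t * evalP (q j) Δx t)
        - (∫ t in (0:ℝ)..Δt, evalP θ 0 t * evalP (q ((j + M - 1) % M)) Δx t)
      = ∫ x in (0:ℝ)..Δx, evalP θ x 0 * (u j).eval x) :
    ∑ j ∈ Finset.range M, ∫ x in (0:ℝ)..Δx, (evalP (q j) x Δt) ^ 2
      ≤ ∑ j ∈ Finset.range M, ∫ x in (0:ℝ)..Δx, ((u j).eval x) ^ 2 := by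
  -- per-cell energy inequality
  have key : ∀ j < M,
      (∫ x in (0:ℝ)..Δx, (evalP (q j) x Δt) ^ 2)
        + (∫ t in (0:ℝ)..Δt, (evalP (q j) Δx t) ^ 2)
      ≤ (∫ x in (0:ℝ)..Δx, ((u j).eval x) ^ 2)
        + (∫ t in (0:ℝ)..Δt, (evalP (q ((j + M - 1) % M)) Δx t) ^ 2) := by
    intro j hj
    set P := q j with hP
    set P' := q ((j + M - 1) % M) with hP'
    have E := hscheme j hj P (hqdeg j)
    -- notation
    set A := ∫ x in (0:ℝ)..Δx, (evalP P x Δt) ^ 2 with hA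
    set B := ∫ x in (0:ℝ)..Δx, (evalP P x 0) ^ 2 with hB
    set R := ∫ t in (0:ℝ)..Δt, (evalP P Δx t) ^ 2 with hR
    set L := ∫ t in (0:ℝ)..Δt, (evalP P 0 t) ^ 2 with hL
    set R' := ∫ t in (0:ℝ)..Δt, (evalP P' Δx t) ^ 2 with hR'
    set S := ∫ t in (0:ℝ)..Δt, evalP P 0 t * evalP P' Δx t with hS
    set D := ∫ x in (0:ℝ)..Δx, evalP P x 0 * (u j).eval x with hD
    set U := ∫ x in (0:ℝ)..Δx, ((u j).eval x) ^ 2 with hU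
    -- rewrite the first boundary term as A
    have e1 : (∫ x in (0:ℝ)..Δx, evalP P x Δt * evalP P x Δt) = A := by
      rw [hA]
      exact intervalIntegral.integral_congr (fun x _ => by ring)
    have e3 : (∫ t in (0:ℝ)..Δt, evalP P Δx t * evalP P Δx t) = R := by
      rw [hR]
      exact intervalIntegral.integral_congr (fun t _ => by ring)
    -- compute the double integral
    have e2 : (∫ x in (0:ℝ)..Δx, ∫ t in (0:ℝ)..Δt,
        (evalP (MvPolynomial.pderiv 1 P) x t
          + evalP (MvPolynomial.pderiv 0 P) x t) * evalP P x t)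
        = (A - B) / 2 + (R - L) / 2 := by
      have hinner : ∀ x : ℝ, (∫ t in (0:ℝ)..Δt,
          (evalP (MvPolynomial.pderiv 1 P) x t
            + evalP (MvPolynomial.pderiv 0 P) x t) * evalP P x t)
          = ((evalP P x Δt ^ 2 - evalP P x 0 ^ 2) / 2)
            + ∫ t in (0:ℝ)..Δt, evalP (MvPolynomial.pderiv 0 P) x t * evalP P x t := by
        intro x
        have hsplit : (∫ t in (0:ℝ)..Δt,
            (evalP (MvPolynomial.pderiv 1 P) x t
              + evalP (MvPolynomial.pderiv 0 P) x t) * evalP P x t)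
            = (∫ t in (0:ℝ)..Δt, evalP (MvPolynomial.pderiv 1 P) x t * evalP P x t)
              + ∫ t in (0:ℝ)..Δt, evalP (MvPolynomial.pderiv 0 P) x t * evalP P x t := by
          rw [← intervalIntegral.integral_add
            (f := fun t => evalP (MvPolynomial.pderiv 1 P) x t * evalP P x t)
            (g := fun t => evalP (MvPolynomial.pderiv 0 P) x t * evalP P x t)
            (((continuous_evalP_t (MvPolynomial.pderiv 1 P) x).mul
              (continuous_evalP_t P x)).intervalIntegrable 0 Δt)
            (((continuous_evalP_t (MvPolynomial.pderiv 0 P) x).mul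
              (continuous_evalP_t P x)).intervalIntegrable 0 Δt)]
          exact intervalIntegral.integral_congr (fun t _ => by ring)
        rw [hsplit, ftc_sq_t]
      rw [intervalIntegral.integral_congr (fun x _ => hinner x)]
      have hcont2 : Continuous fun x : ℝ =>
          ∫ t in (0:ℝ)..Δt, evalP (MvPolynomial.pderiv 0 P) x t * evalP P x t := by
        apply intervalIntegral.continuous_parametric_intervalIntegral_of_continuous'
        exact ((continuous_evalP (MvPolynomial.pderiv 0 P)).mul (continuous_evalP P))
      have hcont1 : Continuous fun x : ℝ => (evalP P x Δt ^ 2 - evalP P x 0 ^ 2) / 2 := by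
        apply Continuous.div_const
        exact ((continuous_evalP_x P Δt).pow 2).sub ((continuous_evalP_x P 0).pow 2)
      rw [intervalIntegral.integral_add (hcont1.intervalIntegrable 0 Δx)
        (hcont2.intervalIntegrable 0 Δx)]
      have part1 : (∫ x in (0:ℝ)..Δx, (evalP P x Δt ^ 2 - evalP P x 0 ^ 2) / 2)
          = (A - B) / 2 := by
        rw [intervalIntegral.integral_div, intervalIntegral.integral_sub
          (f := fun x => evalP P x Δt ^ 2) (g := fun x => evalP P x 0 ^ 2)
          (((continuous_evalP_x P Δt).pow 2).intervalIntegrable 0 Δx)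
          (((continuous_evalP_x P 0).pow 2).intervalIntegrable 0 Δx)]
      have part2 : (∫ x in (0:ℝ)..Δx,
          ∫ t in (0:ℝ)..Δt, evalP (MvPolynomial.pderiv 0 P) x t * evalP P x t)
          = (R - L) / 2 := by
        rw [swap_int ((continuous_evalP (MvPolynomial.pderiv 0 P)).mul (continuous_evalP P))
          hΔx.le hΔt.le]
        rw [intervalIntegral.integral_congr (fun t _ => ftc_sq_x P t 0 Δx)]
        rw [intervalIntegral.integral_div, intervalIntegral.integral_sub
          (f := fun t => evalP P Δx t ^ 2) (g := fun t => evalP P 0 t ^ 2)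
          (((continuous_evalP_t P Δx).pow 2).intervalIntegrable 0 Δt)
          (((continuous_evalP_t P 0).pow 2).intervalIntegrable 0 Δt)]
      rw [part1, part2]
    rw [e1, e2, e3] at E
    -- energy identity: A/2 + B/2 + R/2 + L/2 = D + S
    -- bounds on S and D
    have hSle : S ≤ (L + R') / 2 := by
      have mono : S ≤ ∫ t in (0:ℝ)..Δt, ((evalP P 0 t) ^ 2 + (evalP P' Δx t) ^ 2) / 2 := by
        apply intervalIntegral.integral_mono_on hΔt.le
        · exact ((continuous_evalP_t P 0).mul (continuous_evalP_t P' Δx)).intervalIntegrable 0 Δt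
        · exact ((((continuous_evalP_t P 0).pow 2).add
            ((continuous_evalP_t P' Δx).pow 2)).div_const 2).intervalIntegrable 0 Δt
        · intro t _
          nlinarith [sq_nonneg (evalP P 0 t - evalP P' Δx t)]
      have eq2 : (∫ t in (0:ℝ)..Δt, ((evalP P 0 t) ^ 2 + (evalP P' Δx t) ^ 2) / 2)
          = (L + R') / 2 := by
        rw [intervalIntegral.integral_div, intervalIntegral.integral_add
          (f := fun t => evalP P 0 t ^ 2) (g := fun t => evalP P' Δx t ^ 2)
          (((continuous_evalP_t P 0).pow 2).intervalIntegrable 0 Δt)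
          (((continuous_evalP_t P' Δx).pow 2).intervalIntegrable 0 Δt)]
      linarith [mono, eq2.symm.le, eq2.le]
    have hDle : D ≤ (B + U) / 2 := by
      have hu_cont : Continuous fun x : ℝ => (u j).eval x := (u j).continuous
      have mono : D ≤ ∫ x in (0:ℝ)..Δx, ((evalP P x 0) ^ 2 + ((u j).eval x) ^ 2) / 2 := by
        apply intervalIntegral.integral_mono_on hΔx.le
        · exact ((continuous_evalP_x P 0).mul hu_cont).intervalIntegrable 0 Δx
        · exact ((((continuous_evalP_x P 0).pow 2).add
            (hu_cont.pow 2)).div_const 2).intervalIntegrable 0 Δx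
        · intro x _
          nlinarith [sq_nonneg (evalP P x 0 - (u j).eval x)]
      have eq2 : (∫ x in (0:ℝ)..Δx, ((evalP P x 0) ^ 2 + ((u j).eval x) ^ 2) / 2)
          = (B + U) / 2 := by
        rw [intervalIntegral.integral_div, intervalIntegral.integral_add
          (f := fun x => evalP P x 0 ^ 2) (g := fun x => (u j).eval x ^ 2)
          (((continuous_evalP_x P 0).pow 2).intervalIntegrable 0 Δx)
          ((hu_cont.pow 2).intervalIntegrable 0 Δx)]
      linarith [mono, eq2.le]
    -- nonnegativity of B and L for the final step (not needed, linarith)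
    have hBnonneg : 0 ≤ B := by
      rw [hB, intervalIntegral.integral_of_le hΔx.le]
      exact MeasureTheory.setIntegral_nonneg measurableSet_Ioc (fun x _ => sq_nonneg _)
    have hLnonneg : 0 ≤ L := by
      rw [hL, intervalIntegral.integral_of_le hΔt.le]
      exact MeasureTheory.setIntegral_nonneg measurableSet_Ioc (fun t _ => sq_nonneg _)
    linarith [E, hSle, hDle]
  -- sum up
  have hsum := Finset.sum_le_sum (fun j hj => key j (Finset.mem_range.mp hj))
  rw [Finset.sum_add_distrib, Finset.sum_add_distrib] at hsum
  have hshift : (∑ j ∈ Finset.range M,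
      ∫ t in (0:ℝ)..Δt, (evalP (q ((j + M - 1) % M)) Δx t) ^ 2)
      = ∑ j ∈ Finset.range M, ∫ t in (0:ℝ)..Δt, (evalP (q j) Δx t) ^ 2 :=
    sum_mod_shift hM (fun k => ∫ t in (0:ℝ)..Δt, (evalP (q k) Δx t) ^ 2)
  rw [hshift] at hsum
  linarith [hsum]
end
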